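/- arXiv:0804.2908 — 2 statements merged into one kernel-verified Lean document; each statement's English description precedes it below -/
import Mathlib

section
/- Let T be an n-consistent theory in a countable language with at most ℵ₀ isomorphism classes of n-generated models. Then every n-generated model of T has an ordinal rank (i.e., rk(M) ≠ ∞). -/
open FirstOrder FirstOrder.Language Cardinal

namespace Paper

variable (L : FirstOrder.Language.{0, 0})

/-- A tuple `a` generates `M`: every element is the value of a term at `a`. -/
def Generates {M : Type*} [L.Structure M] {n : ℕ} (a : Fin n → M) : Prop :=
  ∀ y : M, ∃ t : L.Term (Fin n), t.realize a = y

/-- A type over the language `L(c₁,…,cₙ)` in `k` free variables, represented as a set of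
`L`-formulas in variables `Fin n ⊕ Fin k` (the first block playing the role of the constants). -/
def NType (n : ℕ) : Type := Σ k : ℕ, Set (L.Formula (Fin n ⊕ Fin k))

variable {L}

/-- The pair `(M, a)` realizes the type `p` (in the language with the constants interpreted
as `a`). -/
def RealizesNType {M : Type*} [L.Structure M] {n : ℕ} (a : Fin n → M) (p : NType L n) : Prop :=
  ∃ v : Fin p.1 → M, ∀ φ ∈ p.2, φ.Realize (Sum.elim a v)

variable (L) in
/-- The type `pₙ(y) = { y ≠ τ(c̄) | τ an L-term }`. -/
def pType (n : ℕ) : NType L n :=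
  ⟨1, { φ | ∃ t : L.Term (Fin n),
    φ = (Term.equal (t.relabel Sum.inl) (Term.var (Sum.inr 0))).not }⟩

/-- The complete type `p_ā(M)` of a tuple, viewed as a set of sentences of `L(c̄)`. -/
def ctype {M : Type*} [L.Structure M] {n : ℕ} (a : Fin n → M) : NType L n :=
  ⟨0, { φ | ∃ ψ : L.Formula (Fin n), ψ.Realize a ∧ φ = ψ.relabel Sum.inl }⟩

/-- A type (in the language with constants) is supported over a class `K` of models-with-tuples
if some formula, satisfiable in `K`, forces realization of the type throughout `K`. -/
def Supported {T : L.Theory} {n : ℕ} (K : Set (Σ M : Theory.ModelType.{0, 0, 0} T, Fin n → M))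
    (p : NType L n) : Prop :=
  ∃ φ : L.Formula (Fin n ⊕ Fin p.1),
    (∃ P ∈ K, ∃ v : Fin p.1 → P.1, φ.Realize (Sum.elim P.2 v)) ∧
    ∀ P ∈ K, ∀ v : Fin p.1 → P.1, φ.Realize (Sum.elim P.2 v) →
      ∀ ψ ∈ p.2, ψ.Realize (Sum.elim P.2 v)

/-- `rk`: `RankEq T n α M` means the `n`-rank of `M` is `α`. Defined by transfinite
recursion: the rank is `α ≥ 1` iff for every generating `n`-tuple `ā`, `p_ā(M)` is
supported over the class of models (with generating tuple) of `T` omitting `pₙ` and the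
complete types of all models of smaller rank. -/
def RankEq (T : L.Theory) (n : ℕ) : Ordinal.{0} → Theory.ModelType.{0, 0, 0} T → Prop :=
  Ordinal.lt_wf.fix fun α ih M =>
    1 ≤ α ∧ (∃ a : Fin n → M, Generates L a) ∧
      ∀ a : Fin n → M, Generates L a →
        Supported
          { P : Σ N : T.ModelType, Fin n → N |
            ¬ RealizesNType (L := L) P.2 (pType L n) ∧
            ∀ β : Ordinal, (h : β < α) → ∀ N : T.ModelType, ih β h N →
              ∀ b : Fin n → N, Generates L b → ¬ RealizesNType (L := L) P.2 (ctype (L := L) b) }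
          (ctype a)

/-- The class `K(T|P_{n,α})`: models of `T` with a distinguished `n`-tuple, omitting `pₙ`
(equivalently, generated by the tuple) and omitting the complete type of every `n`-generated
model of `T` of rank `< α`. -/
def Kclass (T : L.Theory) (n : ℕ) (α : Ordinal.{0}) :
    Set (Σ M : Theory.ModelType.{0, 0, 0} T, Fin n → M) :=
  { P | ¬ RealizesNType (L := L) P.2 (pType L n) ∧
    ∀ β : Ordinal, β < α → ∀ N : T.ModelType, RankEq T n β N →
      ∀ b : Fin n → N, Generates L b → ¬ RealizesNType (L := L) P.2 (ctype (L := L) b) }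

variable (L) in
/-- `n`-generated models of `T` (with countable carrier). -/
abbrev NGenModel (T : L.Theory) (n : ℕ) : Type 1 :=
  { M : Theory.ModelType.{0, 0, 0} T // ∃ a : Fin n → M, Generates L a }

instance isoSetoid {T : L.Theory} {n : ℕ} : Setoid (NGenModel L T n) where
  r M N := Nonempty (M.1 ≃[L] N.1)
  iseqv := ⟨fun M => ⟨FirstOrder.Language.Equiv.refl L M.1⟩, fun ⟨e⟩ => ⟨e.symm⟩, fun ⟨e⟩ ⟨f⟩ => ⟨FirstOrder.Language.Equiv.comp f e⟩⟩

variable (L) in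
/-- `α_n(T)`: the number of isomorphism classes of `n`-generated models of `T`. -/
def alphaCard (T : L.Theory) (n : ℕ) : Cardinal.{1} :=
  Cardinal.mk (Quotient (isoSetoid (L := L) (T := T) (n := n)))

variable (L) in
/-- `T` is `n`-consistent: it has an `n`-generated model. -/
def NConsistent (T : L.Theory) (n : ℕ) : Prop :=
  ∃ M : Theory.ModelType.{0, 0, 0} T, ∃ a : Fin n → M, Generates L a


/-! ### Universal / existential formulas, ∀∃ theories -/

variable (L) in
/-- A universal formula: universal quantifiers over a quantifier-free formula. -/
def IsUniversalFormula {α : Type} (φ : L.Formula α) : Prop :=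
  ∃ (k : ℕ) (ψ : L.BoundedFormula α k), ψ.IsQF ∧ φ = ψ.alls

variable (L) in
/-- An existential formula: existential quantifiers over a quantifier-free formula. -/
def IsExistentialFormula {α : Type} (φ : L.Formula α) : Prop :=
  ∃ (k : ℕ) (ψ : L.BoundedFormula α k), ψ.IsQF ∧ φ = ψ.exs

/-- Iterated existential quantification of the last `k` bounded variables. -/
def exsTo {α : Type} : ∀ {m k : ℕ}, L.BoundedFormula α (m + k) → L.BoundedFormula α m
  | _, 0, φ => φ
  | _, _ + 1, φ => exsTo φ.ex

variable (L) in
/-- A `∀∃`-sentence: `∀ x̄ ∃ ȳ ψ` with `ψ` quantifier-free. -/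
def IsAESentence (σ : L.Sentence) : Prop :=
  ∃ (m k : ℕ) (ψ : L.BoundedFormula Empty (m + k)), ψ.IsQF ∧ σ = (exsTo ψ).alls

variable (L) in
/-- A `∀∃`-theory. -/
def IsAETheory (T : L.Theory) : Prop := ∀ σ ∈ T, IsAESentence L σ

/-- The universal type `p_{ā,∀}(M)` of a tuple: universal sentences of `L(c̄)` true of `ā`. -/
def utype {M : Type*} [L.Structure M] {n : ℕ} (a : Fin n → M) : NType L n :=
  ⟨0, { φ | ∃ ψ : L.Formula (Fin n),
    IsUniversalFormula L ψ ∧ ψ.Realize a ∧ φ = ψ.relabel Sum.inl }⟩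

/-- A universal type is existentially supported over a class `K` if some existential formula,
satisfiable in `K`, forces its realization throughout `K`. -/
def ESupported {T : L.Theory} {n : ℕ} (K : Set (Σ M : Theory.ModelType.{0, 0, 0} T, Fin n → M))
    (p : NType L n) : Prop :=
  ∃ φ : L.Formula (Fin n ⊕ Fin p.1), IsExistentialFormula L φ ∧
    (∃ P ∈ K, ∃ v : Fin p.1 → P.1, φ.Realize (Sum.elim P.2 v)) ∧
    ∀ P ∈ K, ∀ v : Fin p.1 → P.1, φ.Realize (Sum.elim P.2 v) →
      ∀ ψ ∈ p.2, ψ.Realize (Sum.elim P.2 v)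

/-- `Rk`: the rank defined from universal types and existential supports. -/
def URankEq (T : L.Theory) (n : ℕ) : Ordinal.{0} → Theory.ModelType.{0, 0, 0} T → Prop :=
  Ordinal.lt_wf.fix fun α ih M =>
    1 ≤ α ∧ (∃ a : Fin n → M, Generates L a) ∧
      ∀ a : Fin n → M, Generates L a →
        ESupported
          { P : Σ N : Theory.ModelType.{0, 0, 0} T, Fin n → N |
            ¬ RealizesNType (L := L) P.2 (pType L n) ∧
            ∀ β : Ordinal, (h : β < α) → ∀ N : Theory.ModelType.{0, 0, 0} T, ih β h N →
              ∀ b : Fin n → N, Generates L b → ¬ RealizesNType (L := L) P.2 (utype b) }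
          (utype a)

/-- The class `K(T|Q_{n,α})` of the universal rank. -/
def UKclass (T : L.Theory) (n : ℕ) (α : Ordinal.{0}) :
    Set (Σ M : Theory.ModelType.{0, 0, 0} T, Fin n → M) :=
  { P | ¬ RealizesNType (L := L) P.2 (pType L n) ∧
    ∀ β : Ordinal, β < α → ∀ N : Theory.ModelType.{0, 0, 0} T, URankEq T n β N →
      ∀ b : Fin n → N, Generates L b → ¬ RealizesNType (L := L) P.2 (utype b) }

/-! ### Types in finitely many variables, classes of models, omitting types -/

variable (L) in
/-- A type in finitely many variables. -/
def MType : Type := Σ k : ℕ, Set (L.Formula (Fin k))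

variable (L) in
/-- A type all of whose formulas are universal. -/
def IsUniversalMType (p : MType L) : Prop := ∀ φ ∈ p.2, IsUniversalFormula L φ

/-- A model realizes a type if some tuple satisfies all of its formulas. -/
def MRealizes {T : L.Theory} (M : Theory.ModelType.{0, 0, 0} T) (p : MType L) : Prop :=
  ∃ v : Fin p.1 → M, ∀ φ ∈ p.2, φ.Realize v

/-- The class `K(T|P)` of models of `T` omitting every type in `P`. -/
def KTP (T : L.Theory) (P : Set (MType L)) : Set (Theory.ModelType.{0, 0, 0} T) :=
  { M | ∀ p ∈ P, ¬ MRealizes M p }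

/-- A type is supported over a class `K` of models of `T`. -/
def MSupported {T : L.Theory} (K : Set (Theory.ModelType.{0, 0, 0} T)) (q : MType L) : Prop :=
  ∃ φ : L.Formula (Fin q.1),
    (∃ M ∈ K, ∃ v : Fin q.1 → M, φ.Realize v) ∧
    ∀ M ∈ K, ∀ v : Fin q.1 → M, φ.Realize v → ∀ ψ ∈ q.2, ψ.Realize v

/-- A universal type is existentially supported over a class `K` of models of `T`. -/
def MESupported {T : L.Theory} (K : Set (Theory.ModelType.{0, 0, 0} T)) (q : MType L) : Prop :=
  ∃ φ : L.Formula (Fin q.1), IsExistentialFormula L φ ∧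
    (∃ M ∈ K, ∃ v : Fin q.1 → M, φ.Realize v) ∧
    ∀ M ∈ K, ∀ v : Fin q.1 → M, φ.Realize v → ∀ ψ ∈ q.2, ψ.Realize v


/-! ### Groups -/

/-- The function symbols of the language of groups. -/
inductive GroupFunc : ℕ → Type
  | mul : GroupFunc 2
  | inv : GroupFunc 1
  | one : GroupFunc 0

/-- The first-order language of groups. -/
def grpLang : FirstOrder.Language.{0, 0} := ⟨GroupFunc, fun _ => Empty⟩

/-- Any group is a `grpLang`-structure. -/
instance grpStructure (G : Type*) [Group G] : grpLang.Structure G where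
  funMap {n} f v :=
    match f with
    | .mul => v 0 * v 1
    | .inv => (v 0)⁻¹
    | .one => 1
  RelMap {n} r := r.elim

/-- The universal theory `Th_∀(H)` of a group `H`. -/
def uTheoryOf (H : Type*) [Group H] : grpLang.Theory :=
  { σ | IsUniversalFormula grpLang σ ∧ H ⊨ σ }

/-- The algebraic set `V(S)` defined by a set `S ⊆ H ∗ F(x₁,…,xₙ)` of equations. -/
def Vset {H : Type} [Group H] {n : ℕ} (S : Set (Monoid.Coprod H (FreeGroup (Fin n)))) :
    Set (Fin n → H) :=
  { g | ∀ s ∈ S, Monoid.Coprod.lift (MonoidHom.id H) (FreeGroup.lift g) s = 1 }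

/-- A group `H` is equationally noetherian if every algebraic set over `H` is defined by a
finite subsystem. -/
def EquationallyNoetherian (H : Type) [Group H] : Prop :=
  ∀ (n : ℕ) (S : Set (Monoid.Coprod H (FreeGroup (Fin n)))),
    ∃ S₀ ⊆ S, S₀.Finite ∧ Vset S = Vset S₀

/-- Bundled finitely generated `H`-limit groups (with countable-universe carrier):
finitely generated groups satisfying the universal theory of `H`. -/
def LimitGroup (H : Type) [Group H] : Type 1 :=
  { G : GrpCat.{0} // Group.FG G ∧ (G : Type) ⊨ uTheoryOf H }

instance limitGroupSetoid {H : Type} [Group H] : Setoid (LimitGroup H) where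
  r A B := Nonempty ((A.1 : Type) ≃* (B.1 : Type))
  iseqv := ⟨fun A => ⟨MulEquiv.refl _⟩, fun ⟨e⟩ => ⟨e.symm⟩, fun ⟨e⟩ ⟨f⟩ => ⟨e.trans f⟩⟩

/-- `GRank H G γ` : the group `G`, as a model of `Th_∀(H)`, has universal rank `Rk(G) = γ`
(with respect to some tuple-length). -/
def GRank (H : Type) [Group H] (G : Type) [Group G] (hmod : G ⊨ uTheoryOf H)
    (γ : Ordinal.{0}) : Prop :=
  ∃ n : ℕ, URankEq (uTheoryOf H) n γ
    (@Theory.ModelType.of grpLang (uTheoryOf H) G _ hmod One.instNonempty)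

/-- `G` is `H`-determined: some finite set `X ⊆ G \ {1}` is such that every homomorphism
from `G` to an `H`-limit group killing no element of `X` is injective. -/
def HDetermined (H : Type) [Group H] (G : Type) [Group G] : Prop :=
  ∃ X : Finset G, (1 : G) ∉ X ∧
    ∀ (L' : Type) [Group L'], Group.FG L' → (L' ⊨ uTheoryOf H) →
      ∀ f : G →* L', (∀ x ∈ X, f x ≠ 1) → Function.Injective f

end Paper


/-! ### Auxiliary development for Statement 5 -/

namespace Paper

variable {L : FirstOrder.Language.{0, 0}} {T : L.Theory} {n : ℕ}

/-- Pairs of models with tuples. -/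
abbrev MPair (T : L.Theory) (n : ℕ) : Type 1 := Σ M : Theory.ModelType.{0, 0, 0} T, Fin n → M

section Basic

variable {M : Type*} [L.Structure M] {N : Type*} [L.Structure N]

lemma realize_relabel_inl (ψ : L.Formula (Fin n)) (a : Fin n → M) (v : Fin 0 → M) :
    (ψ.relabel (Sum.inl : Fin n → Fin n ⊕ Fin 0)).Realize (Sum.elim a v) ↔ ψ.Realize a := by
  rw [Formula.realize_relabel, Sum.elim_comp_inl]

lemma formula_realize_subst (ψ : L.Formula (Fin n)) (t : Fin n → L.Term (Fin n)) (v : Fin n → M) :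
    Formula.Realize (ψ.subst t) v ↔ ψ.Realize fun i => (t i).realize v :=
  BoundedFormula.realize_subst

lemma formula_realize_subst' {α β : Type} (ψ : L.Formula α) (t : α → L.Term β)
    {M' : Type*} [L.Structure M'] (v : β → M') :
    Formula.Realize (ψ.subst t) v ↔ ψ.Realize fun i => (t i).realize v :=
  BoundedFormula.realize_subst

lemma realizesNType_ctype_iff (a : Fin n → M) (b : Fin n → N) :
    RealizesNType (L := L) b (ctype (L := L) a) ↔ ∀ ψ : L.Formula (Fin n), ψ.Realize a → ψ.Realize b := by
  constructor
  · rintro ⟨v, hv⟩ ψ hψ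
    have := hv (ψ.relabel Sum.inl) ⟨ψ, hψ, rfl⟩
    erw [realize_relabel_inl] at this; assumption
  · intro h
    refine ⟨Fin.elim0, ?_⟩
    rintro φ ⟨ψ, hψ, rfl⟩
    erw [realize_relabel_inl]
    exact h ψ hψ

lemma realizesNType_pType_iff (a : Fin n → M) :
    RealizesNType a (pType L n) ↔ ¬ Generates L a := by
  constructor
  · rintro ⟨v, hv⟩ hgen
    obtain ⟨t, ht⟩ := hgen (v (0 : Fin 1))
    have := hv _ ⟨t, rfl⟩
    erw [Formula.realize_not, Formula.realize_equal] at this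
    apply this
    erw [Term.realize_relabel, Sum.elim_comp_inl, ht]
    rfl
  · intro h
    have h' : ∃ y : M, ∀ t : L.Term (Fin n), t.realize a ≠ y := by
      by_contra hc
      push_neg at hc
      exact h fun y => hc y
    obtain ⟨y, hy⟩ := h'
    refine ⟨fun _ => y, ?_⟩
    rintro φ ⟨t, rfl⟩
    erw [Formula.realize_not, Formula.realize_equal]
    erw [Term.realize_relabel, Sum.elim_comp_inl]
    exact hy t

lemma generates_of_terms {a b : Fin n → M} (ha : Generates L a)
    (s : Fin n → L.Term (Fin n)) (hab : ∀ i, a i = (s i).realize b) :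
    Generates L b := by
  intro y
  obtain ⟨u, hu⟩ := ha y
  refine ⟨u.subst s, ?_⟩
  rw [Term.realize_subst]
  rw [show (fun i => (s i).realize b) = a from funext fun i => (hab i).symm]
  exact hu

variable (L) in
/-- Two tuples (possibly in different models) with the same complete theory. -/
def EqTh (a : Fin n → M) (b : Fin n → N) : Prop :=
  ∀ ψ : L.Formula (Fin n), ψ.Realize a ↔ ψ.Realize b

lemma EqTh.symm {a : Fin n → M} {b : Fin n → N} (h : EqTh L a b) : EqTh L b a :=
  fun ψ => (h ψ).symm

lemma eqTh_of_realizes {a : Fin n → M} {b : Fin n → N}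
    (h : ∀ ψ : L.Formula (Fin n), ψ.Realize a → ψ.Realize b) : EqTh L a b := by
  intro ψ
  refine ⟨h ψ, fun hb => ?_⟩
  by_contra hna
  exact Formula.realize_not.1 (h ψ.not (Formula.realize_not.2 hna)) hb

lemma EqTh.subst {a : Fin n → M} {b : Fin n → N} (h : EqTh L a b)
    (t : Fin n → L.Term (Fin n)) :
    EqTh L (fun i => (t i).realize a) (fun i => (t i).realize b) := by
  intro ψ
  rw [← formula_realize_subst, ← formula_realize_subst]
  exact h _

lemma EqTh.term_eq {a : Fin n → M} {b : Fin n → N} (h : EqTh L a b)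
    {i : Fin n} {u : L.Term (Fin n)} (hu : a i = u.realize a) : b i = u.realize b := by
  have := (h (Term.equal (Term.var i) u)).1 (by rw [Formula.realize_equal]; simpa using hu)
  rw [Formula.realize_equal] at this
  simpa using this

end Basic

/-- Support of a set of formulas over a class of pairs. -/
def SuppTh (K : Set (MPair T n)) (S : Set (L.Formula (Fin n))) : Prop :=
  ∃ φ : L.Formula (Fin n),
    (∃ P ∈ K, φ.Realize P.2) ∧
    ∀ P ∈ K, φ.Realize P.2 → ∀ ψ ∈ S, ψ.Realize P.2

variable (L) in
/-- The complete theory (in `Fin n` many free variables) of a tuple. -/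
def thSet {M : Type*} [L.Structure M] (a : Fin n → M) : Set (L.Formula (Fin n)) :=
  {ψ | ψ.Realize a}

lemma supported_iff {K : Set (MPair T n)} {M : Theory.ModelType.{0,0,0} T} (a : Fin n → M) :
    Supported K (ctype a) ↔ SuppTh K (thSet L a) := by
  constructor
  · rintro ⟨φ, ⟨P, hP, v, hv⟩, hforce⟩
    refine ⟨φ.relabel (Sum.elim id Fin.elim0), ⟨P, hP, ?_⟩, ?_⟩
    · erw [Formula.realize_relabel]
      rwa [show P.2 ∘ Sum.elim id Fin.elim0 = Sum.elim P.2 v from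
        funext fun x => match x with | Sum.inl i => rfl | Sum.inr j => j.elim0]
    · rintro Q hQ hφQ ψ hψ
      erw [Formula.realize_relabel] at hφQ
      have hQctype := hforce Q hQ Fin.elim0 (by
        rwa [show Q.2 ∘ Sum.elim id Fin.elim0 = Sum.elim Q.2 Fin.elim0 from
          funext fun x => match x with | Sum.inl i => rfl | Sum.inr j => j.elim0] at hφQ)
      have := hQctype (ψ.relabel Sum.inl) ⟨ψ, hψ, rfl⟩
      erw [realize_relabel_inl] at this; assumption
  · rintro ⟨φ, ⟨P, hP, hφP⟩, hforce⟩
    refine ⟨φ.relabel Sum.inl, ⟨P, hP, Fin.elim0, ?_⟩, ?_⟩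
    · erw [realize_relabel_inl]; assumption
    · rintro Q hQ v hφQ ψ' ⟨ψ, hψ, rfl⟩
      erw [realize_relabel_inl] at hφQ ⊢
      exact hforce Q hQ hφQ ψ hψ

lemma rankEq_iff (T : L.Theory) (n : ℕ) (γ : Ordinal.{0}) (M : Theory.ModelType.{0,0,0} T) :
    RankEq T n γ M ↔ (1 ≤ γ ∧ (∃ a : Fin n → M, Generates L a) ∧
      ∀ a : Fin n → M, Generates L a → Supported (Kclass T n γ) (ctype a)) := by
  rw [RankEq, WellFounded.fix_eq]
  rfl

end Paper


namespace Paper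

section Stage2

variable {L : FirstOrder.Language.{0, 0}} {T : L.Theory} {n : ℕ}

lemma kclass_gen {lam : Ordinal.{0}} {P : MPair T n} (hP : P ∈ Kclass T n lam) :
    Generates L P.2 :=
  not_not.mp fun h => hP.1 ((realizesNType_pType_iff P.2).2 h)

lemma rank_transfer {M N : Theory.ModelType.{0,0,0} T} {a : Fin n → M} {b : Fin n → N}
    (ha : Generates L a) (hb : Generates L b) (hab : EqTh L a b) {γ : Ordinal.{0}}
    (hN : RankEq T n γ N) : RankEq T n γ M := by
  rw [rankEq_iff] at hN ⊢
  obtain ⟨h1, -, hsupp⟩ := hN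
  refine ⟨h1, ⟨a, ha⟩, fun a' ha' => ?_⟩
  choose t ht using fun i => ha (a' i)
  choose s hs using fun i => ha' (a i)
  have ha't : a' = fun i => (t i).realize a := funext fun i => (ht i).symm
  have key : ∀ i, b i = (s i).realize (fun j => (t j).realize b) := by
    intro i
    have hMi : a i = ((s i).subst t).realize a := by
      rw [Term.realize_subst, ← ha't]
      exact (hs i).symm
    have := hab.term_eq hMi
    rwa [Term.realize_subst] at this
  have hgb' : Generates L (fun j => (t j).realize b) := generates_of_terms hb s key
  have hsup := hsupp _ hgb'
  rw [supported_iff] at hsup ⊢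
  have hth : thSet L a' = thSet L (fun j => (t j).realize b) :=
    Set.ext fun ψ => by rw [ha't]; exact hab.subst t ψ
  rwa [hth]

lemma rank_unique {γ γ' : Ordinal.{0}} {N : Theory.ModelType.{0,0,0} T}
    (h : RankEq T n γ N) (h' : RankEq T n γ' N) (hlt : γ < γ') : False := by
  rw [rankEq_iff] at h'
  obtain ⟨-, ⟨a, ha⟩, hsupp⟩ := h'
  obtain ⟨φ, ⟨P, hP, v, hφ⟩, hforce⟩ := hsupp a ha
  exact hP.2 γ hlt N h a ha ⟨v, hforce P hP v hφ⟩

lemma generates_equiv {M N : Theory.ModelType.{0,0,0} T} (g : M ≃[L] N)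
    {a : Fin n → M} (ha : Generates L a) : Generates L (⇑g ∘ a) := by
  intro y
  obtain ⟨t, ht⟩ := ha (g.symm y)
  refine ⟨t, ?_⟩
  rw [HomClass.realize_term (g : M ≃[L] N), ht, g.apply_symm_apply]

lemma eqTh_equiv {M N : Theory.ModelType.{0,0,0} T} (g : M ≃[L] N) (a : Fin n → M) :
    EqTh L a (⇑g ∘ a) :=
  fun ψ => (StrongHomClass.realize_formula g ψ).symm

lemma rank_equiv {M N : Theory.ModelType.{0,0,0} T} (g : M ≃[L] N) {γ : Ordinal.{0}}
    (h : RankEq T n γ M) : RankEq T n γ N := by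
  obtain ⟨-, ⟨a, ha⟩, -⟩ := (rankEq_iff T n γ M).1 h
  exact rank_transfer (generates_equiv g ha) ha (eqTh_equiv g a).symm h

/-- There is a strict upper bound for all attained ranks. -/
lemma exists_rank_bound (hα : Paper.alphaCard L T n ≤ Cardinal.aleph0) :
    ∃ lam : Ordinal.{0}, 1 ≤ lam ∧
      ∀ (γ : Ordinal.{0}) (N : Theory.ModelType.{0,0,0} T), RankEq T n γ N → γ < lam := by
  classical
  set A : Set Ordinal.{0} := {γ | ∃ N : Theory.ModelType.{0,0,0} T, RankEq T n γ N} with hA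
  have hmkA : Cardinal.mk A ≤ Cardinal.aleph0 := by
    have hinj : ∃ f : A → Quotient (isoSetoid (L := L) (T := T) (n := n)),
        Function.Injective f := by
      refine ⟨fun γ => ⟦⟨Classical.choose γ.2, ?_⟩⟧, ?_⟩
      · obtain ⟨-, hgen, -⟩ :=
          (rankEq_iff T n γ.1 (Classical.choose γ.2)).1 (Classical.choose_spec γ.2)
        exact hgen
      · intro γ δ him
        obtain ⟨e⟩ := Quotient.exact him
        have h1 := Classical.choose_spec γ.2
        have h2 := Classical.choose_spec δ.2
        have h3 : RankEq T n γ.1 (Classical.choose δ.2) := rank_equiv e h1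
        rcases lt_trichotomy (γ : Ordinal) (δ : Ordinal) with h | h | h
        · exact absurd (rank_unique h3 h2 h) not_false
        · exact Subtype.ext h
        · exact absurd (rank_unique h2 h3 h) not_false
    obtain ⟨f, hf⟩ := hinj
    exact le_trans (Cardinal.mk_le_of_injective hf) hα
  have hcnt : Countable A := Cardinal.mk_le_aleph0_iff.1 hmkA
  have hsmall : Small.{0} A := Countable.toSmall _
  have hbdd : BddAbove A := Ordinal.bddAbove_of_small (s := A)
  refine ⟨max 1 (sSup A + 1), le_max_left _ _, fun γ N hN => ?_⟩
  have hγA : γ ∈ A := ⟨N, hN⟩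
  calc γ ≤ sSup A := le_csSup hbdd hγA
    _ < sSup A + 1 := Order.lt_succ_iff.2 le_rfl
    _ ≤ max 1 (sSup A + 1) := le_max_right _ _

end Stage2

end Paper


namespace Paper

section Stage3

variable {L : FirstOrder.Language.{0, 0}} {T : L.Theory} {n : ℕ}

/-- Conjunction of a list of formulas. -/
def listConj (l : List (L.Formula (Fin n))) : L.Formula (Fin n) :=
  l.foldr (· ⊓ ·) ⊤

lemma realize_listConj {M : Type*} [L.Structure M] (l : List (L.Formula (Fin n)))
    (v : Fin n → M) : (listConj l).Realize v ↔ ∀ ψ ∈ l, ψ.Realize v :=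
  BoundedFormula.realize_foldr_inf l v default

/-- Changing the distinguished tuple of a member of `Kclass` to an interdefinable tuple. -/
lemma kclass_retuple {lam : Ordinal.{0}} {P : MPair T n} (hP : P ∈ Kclass T n lam)
    (r' : Fin n → P.1) (s t : Fin n → L.Term (Fin n))
    (hs : ∀ i, r' i = (s i).realize P.2) (ht : ∀ i, P.2 i = (t i).realize r') :
    (⟨P.1, r'⟩ : MPair T n) ∈ Kclass T n lam := by
  obtain ⟨hp1, hp2⟩ := hP
  have hgen : Generates L P.2 := kclass_gen ⟨hp1, hp2⟩
  have hgen' : Generates L r' := generates_of_terms hgen t ht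
  constructor
  · exact fun h => ((realizesNType_pType_iff r').1 h) hgen'
  · intro β hβ N hN b hb hreal
    rw [realizesNType_ctype_iff] at hreal
    have heq : EqTh L b r' := eqTh_of_realizes hreal
    -- the tuple (fun j => (t j).realize b) in N
    have hbt : ∀ i, b i = (s i).realize (fun j => (t j).realize b) := by
      intro i
      have hr' : r' i = ((s i).subst t).realize r' := by
        rw [Term.realize_subst]
        rw [show (fun j => (t j).realize r') = P.2 from funext fun j => (ht j).symm]
        exact hs i
      have := (heq.symm.term_eq hr' : b i = ((s i).subst t).realize b)
      rwa [Term.realize_subst] at this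
    have hgenbt : Generates L (fun j => (t j).realize b) := generates_of_terms hb s hbt
    have heq2 : EqTh L (fun j => (t j).realize b) P.2 := by
      have := heq.subst t
      rwa [show (fun j => (t j).realize r') = P.2 from funext fun j => (ht j).symm] at this
    exact hp2 β hβ N hN _ hgenbt ((realizesNType_ctype_iff _ P.2).2 fun ψ hψ => (heq2 ψ).1 hψ)

/-- Support of the theory of one generating tuple transfers to any other generating tuple. -/
lemma suppTh_retuple {lam : Ordinal.{0}} {Q : Theory.ModelType.{0,0,0} T} {q a : Fin n → Q}
    (hq : Generates L q) (ha : Generates L a)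
    (h : SuppTh (Kclass T n lam) (thSet L q)) :
    SuppTh (Kclass T n lam) (thSet L a) := by
  classical
  obtain ⟨φ₀, ⟨P, hP, hφP⟩, hforce⟩ := h
  choose t ht using fun i => hq (a i)    -- (t i).realize q = a i
  choose s hs using fun i => ha (q i)    -- (s i).realize a = q i
  -- q i = (s i).realize (fun j => (t j).realize q)
  have hq_st : ∀ i, q i = ((s i).subst t).realize q := by
    intro i
    rw [Term.realize_subst]
    rw [show (fun j => (t j).realize q) = a from funext fun j => ht j]
    exact (hs i).symm
  -- the support formula for `a`
  set φ' : L.Formula (Fin n) :=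
    (φ₀.subst s) ⊓ listConj ((List.finRange n).map fun i =>
      Term.equal (Term.var i) ((t i).subst s)) with hφ'
  have hφ'_realize : ∀ (R : Theory.ModelType.{0,0,0} T) (r : Fin n → R),
      φ'.Realize r ↔ (Formula.Realize (φ₀.subst s) r ∧
        ∀ i, r i = ((t i).subst s).realize r) := by
    intro R r
    rw [hφ', Formula.realize_inf, realize_listConj]
    apply and_congr_right'
    constructor
    · intro hh i
      have := hh _ (List.mem_map.2 ⟨i, List.mem_finRange i, rfl⟩)
      rw [Formula.realize_equal] at this
      simpa using this
    · rintro hh ψ hψ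
      obtain ⟨i, -, rfl⟩ := List.mem_map.1 hψ
      rw [Formula.realize_equal]
      simpa using hh i
  have hEqP : EqTh L q P.2 :=
    eqTh_of_realizes fun ψ hψ => hforce P hP hφP ψ hψ
  refine ⟨φ', ⟨⟨P.1, fun j => (t j).realize P.2⟩, ?_, ?_⟩, ?_⟩
  · -- membership of the retupled pair
    refine kclass_retuple hP _ t s ?_ ?_
    · intro i; rfl
    · intro i
      have := hEqP.term_eq (hq_st i)
      rwa [Term.realize_subst] at this
  · -- φ' realized at the new tuple
    rw [hφ'_realize]
    have hPts : ∀ i, (s i).realize (fun j => (t j).realize P.2) = P.2 i := by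
      intro i
      have := hEqP.term_eq (hq_st i)
      rw [Term.realize_subst] at this
      exact this.symm
    constructor
    · rw [formula_realize_subst]
      rwa [show (fun i => (s i).realize fun j => (t j).realize P.2) = P.2 from
        funext fun i => hPts i]
    · intro i
      rw [Term.realize_subst]
      rw [show (fun j => (s j).realize fun k => (t k).realize P.2) = P.2 from
        funext fun j => hPts j]
  · -- force
    rintro ⟨R, r⟩ hR hφ'R
    rw [hφ'_realize] at hφ'R
    obtain ⟨hsub, heqs⟩ := hφ'R
    have hrt : ∀ i, r i = (t i).realize (fun j => (s j).realize r) := by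
      intro i
      have := heqs i
      rwa [Term.realize_subst] at this
    have hmem' : (⟨R, fun j => (s j).realize r⟩ : MPair T n) ∈ Kclass T n lam :=
      kclass_retuple hR _ s t (fun i => rfl) hrt
    have hφ₀r' : Formula.Realize φ₀ (fun j => (s j).realize r) := by
      rwa [formula_realize_subst] at hsub
    have hEqR : EqTh L q (fun j => (s j).realize r) :=
      eqTh_of_realizes fun ψ hψ => hforce _ hmem' hφ₀r' ψ hψ
    intro ψ hψ
    -- ψ.Realize a; a = t̄(q)
    have hψq : Formula.Realize (ψ.subst t) q := by
      rw [formula_realize_subst]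
      rwa [show (fun i => (t i).realize q) = a from funext fun i => ht i]
    have := (hEqR (ψ.subst t)).1 hψq
    rw [formula_realize_subst] at this
    rwa [show (fun i => (t i).realize fun j => (s j).realize r) = r from
      funext fun i => (hrt i).symm] at this

/-- The master lemma: over the stabilized class, no generating-tuple theory is supported. -/
lemma master_not_suppTh {lam : Ordinal.{0}} (hlam1 : 1 ≤ lam)
    (hbound : ∀ (γ : Ordinal.{0}) (N : Theory.ModelType.{0,0,0} T), RankEq T n γ N → γ < lam)
    (Q : Theory.ModelType.{0,0,0} T) (q : Fin n → Q) (hq : Generates L q) :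
    ¬ SuppTh (Kclass T n lam) (thSet L q) := by
  intro h
  by_cases hr : ∃ γ : Ordinal.{0}, RankEq T n γ Q
  · obtain ⟨γ, hγ⟩ := hr
    obtain ⟨φ₀, ⟨P, hP, hφP⟩, hforce⟩ := h
    exact hP.2 γ (hbound γ Q hγ) Q hγ q hq
      ((realizesNType_ctype_iff q P.2).2 fun ψ hψ => hforce P hP hφP ψ hψ)
  · have hnot : ¬ RankEq T n lam Q := fun h' => hr ⟨lam, h'⟩
    rw [rankEq_iff] at hnot
    push_neg at hnot
    obtain ⟨a, ha, hnsupp⟩ := hnot hlam1 ⟨q, hq⟩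
    exact hnsupp ((supported_iff a).2 (suppTh_retuple hq ha h))

end Stage3

end Paper


namespace Paper

section Stage4

variable {L : FirstOrder.Language.{0, 0}} {T : L.Theory} {n : ℕ}

lemma countable_formula [Countable L.Symbols] (α : Type) [Countable α] :
    Countable (L.Formula α) := by
  have hcard := BoundedFormula.card_le (L := L) (α := α)
  have h1 : Cardinal.lift.{0} (Cardinal.mk α) ≤ Cardinal.aleph0 := by
    simpa using Cardinal.mk_le_aleph0 (α := α)
  have h2 : Cardinal.lift.{0} L.card ≤ Cardinal.aleph0 := by
    simpa [Language.card] using Cardinal.mk_le_aleph0 (α := L.Symbols)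
  have hS : Cardinal.mk (Σ k, L.BoundedFormula α k) ≤ Cardinal.aleph0 := by
    refine hcard.trans (max_le le_rfl ?_)
    exact le_of_le_of_eq (add_le_add h1 h2) Cardinal.aleph0_add_aleph0
  haveI hcnt : Countable (Σ k, L.BoundedFormula α k) := Cardinal.mk_le_aleph0_iff.1 hS
  exact Function.Injective.countable
    (f := (Sigma.mk 0 : L.BoundedFormula α 0 → Σ k, L.BoundedFormula α k)) sigma_mk_injective

lemma countable_of_generates [Countable L.Symbols] {M : Type*} [L.Structure M]
    {a : Fin n → M} (ha : Generates L a) : Countable M :=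
  Function.Surjective.countable (f := fun t : L.Term (Fin n) => t.realize a) fun y => ha y

/-- The set of complete theories of generating pairs. -/
def pairTheories (T : L.Theory) (n : ℕ) : Set (Set (L.Formula (Fin n))) :=
  {S | ∃ (Q : Theory.ModelType.{0,0,0} T) (q : Fin n → Q), Generates L q ∧ S = thSet L q}

lemma pairTheories_countable [Countable L.Symbols]
    (hα : alphaCard L T n ≤ Cardinal.aleph0) : (pairTheories T n).Countable := by
  classical
  haveI hQc : Countable (Quotient (isoSetoid (L := L) (T := T) (n := n))) := by
    rw [← Cardinal.mk_le_aleph0_iff]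
    exact hα
  haveI hcc : ∀ c : Quotient (isoSetoid (L := L) (T := T) (n := n)),
      Countable ((Quotient.out c).1 : Type) := fun c => by
    obtain ⟨a, ha⟩ := (Quotient.out c).2
    exact countable_of_generates ha
  have hsub : pairTheories T n ⊆ Set.range
      (fun x : Σ c : Quotient (isoSetoid (L := L) (T := T) (n := n)),
        (Fin n → ((Quotient.out c).1 : Type)) => thSet L x.2) := by
    rintro S ⟨Q, q, hq, rfl⟩
    set X : NGenModel L T n := ⟨Q, q, hq⟩ with hX
    obtain ⟨g⟩ : Nonempty (((⟦X⟧ : Quotient (isoSetoid (L := L) (T := T) (n := n))).out).1 ≃[L] Q) :=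
      Quotient.mk_out (s := isoSetoid (L := L) (T := T) (n := n)) X
    refine ⟨⟨⟦X⟧, ⇑g.symm ∘ q⟩, ?_⟩
    have hgq : ⇑g ∘ (⇑g.symm ∘ q) = q := funext fun i => g.apply_symm_apply (q i)
    ext ψ
    simp only [thSet, Set.mem_setOf_eq]
    rw [← StrongHomClass.realize_formula g (φ := ψ) (v := ⇑g.symm ∘ q), hgq]
  exact (Set.countable_range _).mono hsub

/-- Existential quantification over one extra variable. -/
noncomputable def exQ (χ : L.Formula (Fin n ⊕ Fin 1)) : L.Formula (Fin n) :=
  χ.iExs (Fin 1)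

lemma realize_exQ {M : Type*} [L.Structure M] (χ : L.Formula (Fin n ⊕ Fin 1)) (r : Fin n → M) :
    (exQ χ).Realize r ↔ ∃ y : M, χ.Realize (Sum.elim r fun _ => y) := by
  rw [exQ, Formula.Realize, BoundedFormula.realize_iExs]
  constructor
  · rintro ⟨i, hi⟩
    refine ⟨i 0, ?_⟩
    have heq : Sum.elim r i = Sum.elim r (fun _ => i 0) := by
      funext x
      rcases x with j | j
      · rfl
      · simp [Fin.eq_zero j]
    rwa [heq] at hi
  · rintro ⟨y, hy⟩
    exact ⟨fun _ => y, hy⟩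

/-- Substitution of a term for the extra variable. -/
def instQ (χ : L.Formula (Fin n ⊕ Fin 1)) (u : L.Term (Fin n)) : L.Formula (Fin n) :=
  χ.subst (Sum.elim Term.var fun _ => u)

lemma realize_instQ {M : Type*} [L.Structure M] (χ : L.Formula (Fin n ⊕ Fin 1))
    (u : L.Term (Fin n)) (r : Fin n → M) :
    (instQ χ u).Realize r ↔ χ.Realize (Sum.elim r fun _ => u.realize r) := by
  rw [instQ, Formula.Realize, BoundedFormula.realize_subst]
  apply iff_of_eq
  congr 1
  funext x
  rcases x with j | j <;> rfl

end Stage4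

section Chain

variable {σ : Type*} (P : List σ → Prop) (Spec : ℕ → σ → Prop)
variable (h0 : P []) (hstep : ∀ k l, P l → ∃ x, P (x :: l) ∧ Spec k x)

/-- Iteratively extended list with invariant `P` and per-step specification `Spec`. -/
noncomputable def chainF : ℕ → {l : List σ // P l}
  | 0 => ⟨[], h0⟩
  | (k+1) =>
    ⟨Classical.choose (hstep k (chainF k).1 (chainF k).2) :: (chainF k).1,
      (Classical.choose_spec (hstep k (chainF k).1 (chainF k).2)).1⟩

/-- The element added at step `k`. -/
noncomputable def chainX (k : ℕ) : σ :=
  Classical.choose (hstep k (chainF P Spec h0 hstep k).1 (chainF P Spec h0 hstep k).2)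

lemma chainF_succ (k : ℕ) :
    (chainF P Spec h0 hstep (k+1)).1
      = chainX P Spec h0 hstep k :: (chainF P Spec h0 hstep k).1 := rfl

lemma chainX_spec (k : ℕ) : Spec k (chainX P Spec h0 hstep k) :=
  (Classical.choose_spec (hstep k (chainF P Spec h0 hstep k).1 (chainF P Spec h0 hstep k).2)).2

lemma chainX_mem (k : ℕ) : chainX P Spec h0 hstep k ∈ (chainF P Spec h0 hstep (k+1)).1 := by
  rw [chainF_succ]
  exact List.mem_cons_self

lemma chainF_mono {k m : ℕ} (h : k ≤ m) :
    ∀ x ∈ (chainF P Spec h0 hstep k).1, x ∈ (chainF P Spec h0 hstep m).1 := by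
  induction h with
  | refl => exact fun x hx => hx
  | step h ih =>
    intro x hx
    rw [chainF_succ]
    exact List.mem_cons_of_mem _ (ih x hx)

end Chain

section Stage4b

variable {L : FirstOrder.Language.{0, 0}} {T : L.Theory} {n : ℕ}

/-- Satisfiability of a list of formulas in the class `Kclass T n lam`. -/
def SatK (T : L.Theory) (n : ℕ) (lam : Ordinal.{0}) (l : List (L.Formula (Fin n))) : Prop :=
  ∃ P ∈ Kclass T n lam, ∀ ψ ∈ l, ψ.Realize P.2

lemma step_henkin {lam : Ordinal.{0}} {l : List (L.Formula (Fin n))} (h : SatK T n lam l)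
    (χ : L.Formula (Fin n ⊕ Fin 1)) :
    ∃ x, SatK T n lam (x :: l) ∧
      (x = (exQ χ).not ∨ ∃ u : L.Term (Fin n), x = instQ χ u) := by
  obtain ⟨P, hP, hl⟩ := h
  by_cases hE : ∃ y : P.1, χ.Realize (Sum.elim P.2 fun _ => y)
  · obtain ⟨y, hy⟩ := hE
    obtain ⟨u, hu⟩ := kclass_gen hP y
    refine ⟨instQ χ u, ⟨P, hP, ?_⟩, Or.inr ⟨u, rfl⟩⟩
    intro ψ hψ
    rcases List.mem_cons.1 hψ with rfl | hmem
    · rw [realize_instQ, hu]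
      exact hy
    · exact hl ψ hmem
  · refine ⟨(exQ χ).not, ⟨P, hP, ?_⟩, Or.inl rfl⟩
    intro ψ hψ
    rcases List.mem_cons.1 hψ with rfl | hmem
    · rw [Formula.realize_not, realize_exQ]
      exact hE
    · exact hl ψ hmem

lemma step_avoid {lam : Ordinal.{0}} (hlam1 : 1 ≤ lam)
    (hbound : ∀ (γ : Ordinal.{0}) (N : Theory.ModelType.{0,0,0} T), RankEq T n γ N → γ < lam)
    {l : List (L.Formula (Fin n))} (h : SatK T n lam l)
    {S : Set (L.Formula (Fin n))} (hS : S ∈ pairTheories T n) :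
    ∃ x, SatK T n lam (x :: l) ∧ ∃ ψ ∈ S, x = ψ.not := by
  obtain ⟨Q, q, hq, rfl⟩ := hS
  by_contra hno
  push_neg at hno
  apply master_not_suppTh hlam1 hbound Q q hq
  obtain ⟨P, hP, hl⟩ := h
  refine ⟨listConj l, ⟨P, hP, (realize_listConj l P.2).2 hl⟩, ?_⟩
  rintro R hR hconj ψ hψ
  by_contra hψR
  have hsat : SatK T n lam (ψ.not :: l) := by
    refine ⟨R, hR, ?_⟩
    intro ψ' hψ'
    rcases List.mem_cons.1 hψ' with rfl | hmem
    · exact Formula.realize_not.2 hψR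
    · exact (realize_listConj l R.2).1 hconj ψ' hmem
  exact hno ψ.not hsat ψ hψ rfl

end Stage4b

end Paper

/-- If `T` is `n`-consistent with at most `ℵ₀` isomorphism classes of
`n`-generated models, then every `n`-generated model of `T` has an ordinal rank. -/
theorem stmt_5 (L : FirstOrder.Language.{0, 0}) [Countable L.Symbols] (T : L.Theory)
    (n : ℕ) (hcons : Paper.NConsistent L T n)
    (hα : Paper.alphaCard L T n ≤ Cardinal.aleph0)
    (M : FirstOrder.Language.Theory.ModelType.{0, 0, 0} T)
    (hgen : ∃ a : Fin n → M, Paper.Generates L a) :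
    ∃ γ : Ordinal, Paper.RankEq T n γ M := by
  classical
  by_contra hM
  push_neg at hM
  obtain ⟨lam, hlam1, hbound⟩ := Paper.exists_rank_bound (L := L) (T := T) (n := n) hα
  obtain ⟨a₀, ha₀⟩ := hgen
  -- the pair (M, a₀) belongs to the stabilized class
  have hseed : (⟨M, a₀⟩ : Paper.MPair T n) ∈ Paper.Kclass T n lam := by
    constructor
    · exact fun h => (Paper.realizesNType_pType_iff a₀).1 h ha₀
    · intro β hβ N hN b hb hreal
      rw [Paper.realizesNType_ctype_iff] at hreal
      exact hM β (Paper.rank_transfer ha₀ hb (Paper.eqTh_of_realizes hreal).symm hN)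
  have h0 : Paper.SatK T n lam [] := ⟨⟨M, a₀⟩, hseed, by simp⟩
  -- enumerations
  haveI hc1 : Countable (L.Formula (Fin n ⊕ Fin 1)) := Paper.countable_formula _
  obtain ⟨eB, heB⟩ := exists_surjective_nat (L.Formula (Fin n ⊕ Fin 1))
  have hPTne : (Paper.pairTheories T n).Nonempty := by
    obtain ⟨Q, q, hq⟩ := hcons
    exact ⟨_, ⟨Q, q, hq, rfl⟩⟩
  obtain ⟨D, hD⟩ := (Paper.pairTheories_countable hα).exists_eq_range hPTne
  have hDmem : ∀ j, D j ∈ Paper.pairTheories T n := fun j => hD ▸ Set.mem_range_self j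
  -- the per-step specification
  set Spec : ℕ → L.Formula (Fin n) → Prop := fun k x =>
    if k % 2 = 0 then
      (x = (Paper.exQ (eB (k / 2))).not ∨ ∃ u : L.Term (Fin n), x = Paper.instQ (eB (k / 2)) u)
    else (∃ ψ ∈ D (k / 2), x = ψ.not) with hSpec
  have hstep : ∀ k l, Paper.SatK T n lam l → ∃ x, Paper.SatK T n lam (x :: l) ∧ Spec k x := by
    intro k l hl
    by_cases hk : k % 2 = 0
    · obtain ⟨x, h1, h2⟩ := Paper.step_henkin hl (eB (k / 2))
      exact ⟨x, h1, by rw [hSpec]; simp only [hk, if_pos rfl]; exact h2⟩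
    · obtain ⟨x, h1, h2⟩ := Paper.step_avoid hlam1 hbound hl (hDmem (k / 2))
      exact ⟨x, h1, by rw [hSpec]; simp only [if_neg hk]; exact h2⟩
  let F : ℕ → {l : List (L.Formula (Fin n)) // Paper.SatK T n lam l} :=
    Paper.chainF (Paper.SatK T n lam) Spec h0 hstep
  let X : ℕ → L.Formula (Fin n) := Paper.chainX (Paper.SatK T n lam) Spec h0 hstep
  have hXspec : ∀ k, Spec k (X k) := Paper.chainX_spec (Paper.SatK T n lam) Spec h0 hstep
  have hXmem : ∀ k, X k ∈ (F (k + 1)).1 := Paper.chainX_mem (Paper.SatK T n lam) Spec h0 hstep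
  have hFmono : ∀ {k m : ℕ}, k ≤ m → ∀ x ∈ (F k).1, x ∈ (F m).1 :=
    fun h => Paper.chainF_mono (Paper.SatK T n lam) Spec h0 hstep h
  set SF : Set (L.Formula (Fin n)) := {ψ | ∃ k, ψ ∈ (F k).1} with hSF
  -- compactness: SF together with T is satisfiable in the expanded language
  set U : (L[[Fin n]]).Theory :=
    (L.lhomWithConstants (Fin n)).onTheory T ∪ Formula.equivSentence '' SF with hU
  have hUsat : U.IsSatisfiable := by
    rw [Theory.isSatisfiable_iff_isFinitelySatisfiable]
    intro T0 hT0
    have hT0' : ∀ σ ∈ T0, σ ∈ (L.lhomWithConstants (Fin n)).onTheory T ∨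
        ∃ k, ∃ ψ ∈ (F k).1, σ = Formula.equivSentence ψ := by
      intro σ hσ
      rcases hT0 hσ with h | ⟨ψ, hψ, rfl⟩
      · exact Or.inl h
      · obtain ⟨k, hk⟩ := hψ
        exact Or.inr ⟨k, ψ, hk, rfl⟩
    set g : (L[[Fin n]]).Sentence → ℕ := fun σ =>
      if h : ∃ k, ∃ ψ ∈ (F k).1, σ = Formula.equivSentence ψ then Classical.choose h else 0
      with hg
    set K0 : ℕ := T0.sup g with hK0
    obtain ⟨P, hP, hall⟩ := (F K0).2
    letI : (constantsOn (Fin n)).Structure (↥P.1) := constantsOn.structure P.2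
    have hmod : ∀ σ ∈ T0, (↥P.1) ⊨ σ := by
      intro σ hσ
      rcases hT0' σ hσ with h | h
      · obtain ⟨σ₀, hσ₀, rfl⟩ := LHom.mem_onTheory.1 h
        rw [LHom.realize_onSentence]
        exact Theory.realize_sentence_of_mem T hσ₀
      · have hgσ : ∃ ψ ∈ (F (g σ)).1, σ = Formula.equivSentence ψ := by
          rw [hg]
          simp only [h, dif_pos]
          exact Classical.choose_spec h
        obtain ⟨ψ, hψ, rfl⟩ := hgσ
        have hψK : ψ ∈ (F K0).1 := hFmono (Finset.le_sup hσ) ψ hψ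
        have : ψ.Realize P.2 := hall ψ hψK
        exact (Formula.realize_equivSentence_symm (M := ↥P.1) (Formula.equivSentence ψ) P.2).1
          (by rw [_root_.Equiv.symm_apply_apply]; exact this)
    haveI : (↥P.1) ⊨ (T0 : (L[[Fin n]]).Theory) := Theory.model_iff _ |>.2 hmod
    exact Theory.Model.isSatisfiable (↥P.1)
  obtain ⟨M0⟩ := hUsat
  letI IL : L.Structure (↥M0) := (L.lhomWithConstants (Fin n)).reduct (↥M0)
  letI IE : (L.lhomWithConstants (Fin n)).IsExpansionOn (↥M0) :=
    LHom.isExpansionOn_reduct (L.lhomWithConstants (Fin n)) (↥M0)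
  haveI hM0T : (↥M0) ⊨ T := by
    have h1 : (↥M0) ⊨ (L.lhomWithConstants (Fin n)).onTheory T :=
      M0.is_model.mono Set.subset_union_left
    exact (LHom.onTheory_model (L.lhomWithConstants (Fin n)) T).1 h1
  set abar : Fin n → (↥M0) := fun i => ((L.con i : (L[[Fin n]]).Constants) : ↥M0) with habar
  have hrealF : ∀ ψ ∈ SF, ψ.Realize abar := by
    intro ψ hψ
    have hin : Formula.equivSentence ψ ∈ U := Set.mem_union_right _ ⟨ψ, hψ, rfl⟩
    have : (↥M0) ⊨ Formula.equivSentence ψ := Theory.realize_sentence_of_mem U hin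
    exact (Formula.realize_equivSentence (↥M0) ψ).1 this
  have hXreal : ∀ k, (X k).Realize abar := fun k => hrealF (X k) ⟨k + 1, hXmem k⟩
  -- the generated substructure
  set S₀ : L.Substructure (↥M0) := Substructure.closure L (Set.range abar) with hS₀
  have hterm : ∀ x ∈ S₀, ∃ t : L.Term (Fin n), t.realize abar = x := by
    intro x hx
    rw [hS₀, Substructure.mem_closure_iff_exists_term] at hx
    obtain ⟨t, ht⟩ := hx
    refine ⟨t.relabel (fun y => Classical.choose y.2), ?_⟩
    rw [Term.realize_relabel]
    rw [show (abar ∘ fun y : ↥(Set.range abar) => Classical.choose y.2)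
      = ((↑) : ↥(Set.range abar) → ↥M0) from funext fun y => Classical.choose_spec y.2]
    exact ht
  have habar_mem : ∀ i, abar i ∈ S₀ :=
    fun i => Substructure.subset_closure (Set.mem_range_self i)
  -- Tarski-Vaught via the Henkin steps
  have hkey : ∀ (m : ℕ) (φ : L.BoundedFormula Empty (m + 1)) (x : Fin m → S₀),
      ∃ χ : L.Formula (Fin n ⊕ Fin 1), ∀ y : ↥M0,
        (χ.Realize (Sum.elim abar fun _ => y) ↔
          φ.Realize default (Fin.snoc (((↑) : S₀ → ↥M0) ∘ x) y)) := by
    intro m φ x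
    choose u hu using fun i => hterm (↑(x i)) (x i).2
    refine ⟨(φ.toFormula).subst (Sum.elim (fun e => Empty.elim e)
      (Fin.snoc (fun j => (u j).relabel Sum.inl) (Term.var (Sum.inr 0)))), fun y => ?_⟩
    rw [Paper.formula_realize_subst' , BoundedFormula.realize_toFormula]
    apply iff_of_eq
    congr 1
    · funext e
      exact e.elim
    · funext j
      refine Fin.lastCases ?_ ?_ j
      · simp only [Function.comp_apply, Sum.elim_inr, Fin.snoc_last]
        rfl
      · intro j
        simp only [Function.comp_apply, Sum.elim_inr, Fin.snoc_castSucc]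
        rw [Term.realize_relabel, Sum.elim_comp_inl]
        exact hu j
  have htv : ∀ (m : ℕ) (φ : L.BoundedFormula Empty (m + 1)) (x : Fin m → S₀) (a : ↥M0),
      φ.Realize default (Fin.snoc (((↑) : S₀ → ↥M0) ∘ x) a : _ → ↥M0) →
        ∃ b : S₀, φ.Realize default (Fin.snoc (((↑) : S₀ → ↥M0) ∘ x) b : _ → ↥M0) := by
    intro m φ x a ha
    obtain ⟨χ, hχ⟩ := hkey m φ x
    obtain ⟨j, rfl⟩ := heB χ
    have hspec := hXspec (2 * j)
    rw [hSpec] at hspec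
    simp only [Nat.mul_mod_right, if_pos rfl, Nat.mul_div_cancel_left j (by norm_num : 0 < 2)]
      at hspec
    rcases hspec with hnot | ⟨u, hinst⟩
    · exfalso
      have := hXreal (2 * j)
      rw [hnot, Formula.realize_not, Paper.realize_exQ] at this
      exact this ⟨a, (hχ a).2 ha⟩
    · have := hXreal (2 * j)
      rw [hinst, Paper.realize_instQ] at this
      have hb : (Term.realize abar u) ∈ S₀ :=
        u.realize_mem abar habar_mem
      exact ⟨⟨u.realize abar, hb⟩, (hχ _).1 this⟩
  have hElem : S₀.IsElementary := S₀.isElementary_of_exists htv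
  let E : L.ElementarySubstructure (↥M0) := ⟨S₀, hElem⟩
  haveI hET : (↥E) ⊨ T := E.theory_model
  let MS : Theory.ModelType.{0,0,0} T := Theory.ModelType.of T (↥E)
  set aS : Fin n → (↥E) := fun i => ⟨abar i, habar_mem i⟩ with haS
  have hcoe : ((↑) : ↥E → ↥M0) ∘ aS = abar := funext fun i => rfl
  have hgenS : Paper.Generates L aS := by
    intro y
    obtain ⟨t, ht⟩ := hterm (↑y) y.2
    refine ⟨t, ?_⟩
    apply Subtype.ext
    rw [show ((t.realize aS : ↥E) : ↥M0) = t.realize (((↑) : ↥E → ↥M0) ∘ aS) from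
      (HomClass.realize_term E.subtype).symm, hcoe]
    exact ht
  have hthm : Paper.thSet L aS ∈ Paper.pairTheories T n := ⟨MS, aS, hgenS, rfl⟩
  rw [hD] at hthm
  obtain ⟨j, hDj⟩ := hthm
  have hspec := hXspec (2 * j + 1)
  rw [hSpec] at hspec
  have hodd : (2 * j + 1) % 2 ≠ 0 := by omega
  rw [if_neg hodd] at hspec
  have hdiv : (2 * j + 1) / 2 = j := by omega
  rw [hdiv] at hspec
  obtain ⟨ψ, hψD, hXj⟩ := hspec
  have hψS : ψ.Realize aS := by
    have : ψ ∈ Paper.thSet L aS := by rw [← hDj]; exact hψD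
    exact this
  have hψab : ¬ ψ.Realize abar := by
    have := hXreal (2 * j + 1)
    rw [hXj, Formula.realize_not] at this
    exact this
  apply hψab
  rw [← hcoe]
  exact (E.subtype.map_formula ψ aS).2 hψS
end

section
/- Let M be an n-generated model of T generated by ā such that p_ā(M) is supported over K(T|P_{n,γ}). Then for every generating n-tuple b̄ of M, the type p_b̄(M) is also supported over K(T|P_{n,γ}). -/
open FirstOrder FirstOrder.Language Cardinal

/-! ### Auxiliary lemmas for Statement 6 -/

namespace Paper

section Aux

variable {L : FirstOrder.Language.{0, 0}} {n : ℕ}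

/-- Apply a family of terms to a tuple. -/
def tapp {M : Type*} [L.Structure M] (f : Fin n → L.Term (Fin n)) (c : Fin n → M) :
    Fin n → M := fun i => (f i).realize c

lemma realizes_ctype_iff {M N : Type*} [L.Structure M] [L.Structure N]
    {c : Fin n → M} {d : Fin n → N} :
    RealizesNType d (ctype (L := L) c) ↔
      ∀ ψ : L.Formula (Fin n), ψ.Realize c → ψ.Realize d := by
  constructor
  · rintro ⟨v, hv⟩ ψ hψ
    have := hv (ψ.relabel Sum.inl) ⟨ψ, hψ, rfl⟩
    rwa [Formula.realize_relabel, Sum.elim_comp_inl] at this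
  · intro h
    refine ⟨Fin.elim0, ?_⟩
    rintro φ ⟨ψ, hψ, rfl⟩
    erw [Formula.realize_relabel, Sum.elim_comp_inl]
    exact h ψ hψ

lemma realizes_ctype_iff' {M N : Type*} [L.Structure M] [L.Structure N]
    {c : Fin n → M} {d : Fin n → N} (h : RealizesNType d (ctype (L := L) c))
    (ψ : L.Formula (Fin n)) : ψ.Realize d ↔ ψ.Realize c := by
  rw [realizes_ctype_iff] at h
  constructor
  · intro hd
    by_contra hc
    have := h ψ.not (by rwa [Formula.realize_not])
    rw [Formula.realize_not] at this
    exact this hd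
  · exact h ψ

lemma not_realizes_pType_iff {M : Type*} [L.Structure M] {c : Fin n → M} :
    ¬ RealizesNType c (pType L n) ↔ Generates L c := by
  constructor
  · intro h y
    by_contra hy
    push_neg at hy
    refine h ⟨fun _ => y, ?_⟩
    rintro φ ⟨u, rfl⟩
    erw [Formula.realize_not, Formula.realize_equal]
    erw [Term.realize_relabel, Sum.elim_comp_inl]
    exact hy u
  · rintro hgen ⟨v, hv⟩
    obtain ⟨u, hu⟩ := hgen (v (show Fin (pType L n).1 from (0 : Fin 1)))
    have := hv _ ⟨u, rfl⟩
    erw [Formula.realize_not, Formula.realize_equal] at this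
    apply this
    erw [Term.realize_relabel, Sum.elim_comp_inl]
    exact hu

lemma realize_subst_tapp {M : Type*} [L.Structure M] {ψ : L.Formula (Fin n)}
    {f : Fin n → L.Term (Fin n)} {c : Fin n → M} :
    FirstOrder.Language.Formula.Realize (ψ.subst f) c ↔ ψ.Realize (tapp f c) :=
  BoundedFormula.realize_subst

lemma generates_tapp {M : Type*} [L.Structure M] {f : Fin n → L.Term (Fin n)}
    {c d : Fin n → M} (h : Generates L c) (hd : tapp f d = c) : Generates L d := by
  intro y
  obtain ⟨u, hu⟩ := h y
  refine ⟨u.subst f, ?_⟩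
  rw [Term.realize_subst]
  show u.realize (tapp f d) = y
  rw [hd]; exact hu

/-- The formula saying `f(g(x̄)) = x̄`. -/
noncomputable def eqForm (f g : Fin n → L.Term (Fin n)) : L.Formula (Fin n) :=
  BoundedFormula.iInf fun i => Term.equal ((f i).subst g) (Term.var i)

lemma realize_iInf_formula {β : Type*} [Finite β] {M : Type*} [L.Structure M]
    (f : β → L.Formula (Fin n)) (v : Fin n → M) :
    FirstOrder.Language.Formula.Realize (BoundedFormula.iInf f) v ↔
      ∀ b, FirstOrder.Language.Formula.Realize (f b) v :=
  BoundedFormula.realize_iInf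

lemma realize_eqForm {M : Type*} [L.Structure M] {f g : Fin n → L.Term (Fin n)}
    {c : Fin n → M} :
    FirstOrder.Language.Formula.Realize (eqForm f g) c ↔ tapp f (tapp g c) = c := by
  rw [eqForm, realize_iInf_formula]
  constructor
  · intro h
    funext i
    have := h i
    rw [Formula.realize_equal, Term.realize_subst, Term.realize_var] at this
    exact this
  · intro h i
    rw [Formula.realize_equal, Term.realize_subst, Term.realize_var]
    exact congrFun h i

lemma mem_Kclass_aux {T : L.Theory} {γ : Ordinal}
    (P : Σ M : FirstOrder.Language.Theory.ModelType.{0, 0, 0} T, Fin n → M)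
    (hP : P ∈ Kclass T n γ) (f g : Fin n → L.Term (Fin n)) (d : Fin n → P.1)
    (hd : tapp f P.2 = d) (he : tapp g d = P.2) :
    (⟨P.1, d⟩ : Σ M : FirstOrder.Language.Theory.ModelType.{0, 0, 0} T, Fin n → M) ∈
      Kclass T n γ := by
  obtain ⟨hP1, hP2⟩ := hP
  refine ⟨?_, ?_⟩
  · rw [not_realizes_pType_iff] at hP1 ⊢
    exact generates_tapp hP1 he
  · intro β hβ N hN c hc hreal
    have hiff := realizes_ctype_iff' hreal
    have hfg : (eqForm f g).Realize d := by
      rw [realize_eqForm, he, hd]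
    have hc' : tapp f (tapp g c) = c := by
      rw [← realize_eqForm]
      exact (hiff _).mp hfg
    have hgenc' : Generates L (tapp g c) := generates_tapp hc hc'
    apply hP2 β hβ N hN (tapp g c) hgenc'
    rw [realizes_ctype_iff]
    intro ψ hψ
    rw [← he, ← realize_subst_tapp]
    rw [← realize_subst_tapp] at hψ
    exact (hiff _).mpr hψ

end Aux

end Paper

/-- If `p_ā(M)` is supported over `K(T|P_{n,γ})` for one generating
`n`-tuple `ā`, then `p_b̄(M)` is supported over `K(T|P_{n,γ})` for every generating
`n`-tuple `b̄`. -/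
theorem stmt_6 (L : FirstOrder.Language.{0, 0}) [Countable L.Symbols] (T : L.Theory)
    (n : ℕ) (γ : Ordinal) (M : FirstOrder.Language.Theory.ModelType.{0, 0, 0} T)
    (a : Fin n → M) (ha : Paper.Generates L a)
    (hsup : Paper.Supported (Paper.Kclass T n γ) (Paper.ctype a)) :
    ∀ b : Fin n → M, Paper.Generates L b →
      Paper.Supported (Paper.Kclass T n γ) (Paper.ctype b) := by
  classical
  intro b hb
  choose t ht using fun i => ha (b i)
  choose s hs using fun j => hb (a j)
  have htapp_t : Paper.tapp t a = b := funext ht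
  have htapp_s : Paper.tapp s b = a := funext hs
  obtain ⟨φ, ⟨P₀, hP₀K, v₀, hφ₀⟩, hforce⟩ := hsup
  -- convert φ to a formula in the `Fin n` variables only
  let φ₁ : L.Formula (Fin n) := φ.relabel (Sum.elim id Fin.elim0)
  have hφ₁ : ∀ (X : Type) (_ : L.Structure X) (c : Fin n → X)
      (v : Fin (Paper.ctype (L := L) a).1 → X),
      φ₁.Realize c ↔ φ.Realize (Sum.elim c v) := by
    intro X _ c v
    have hcv : c ∘ (Sum.elim id Fin.elim0) = Sum.elim c v := by
      funext x
      cases x with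
      | inl i => rfl
      | inr i => exact i.elim0
    erw [FirstOrder.Language.Formula.realize_relabel, hcv]
    exact Iff.rfl
  -- the support formula for `ctype b`
  let φ' : L.Formula (Fin n) := (φ₁.subst s) ⊓ Paper.eqForm t s
  refine ⟨FirstOrder.Language.Formula.relabel Sum.inl φ', ?_, ?_⟩
  · -- satisfiability: witness `(P₀, t(P₀.2))`
    have h0 : Paper.RealizesNType P₀.2 (Paper.ctype (L := L) a) :=
      ⟨v₀, hforce P₀ hP₀K v₀ hφ₀⟩
    have hiff0 := Paper.realizes_ctype_iff' h0
    have hsts : Paper.tapp s (Paper.tapp t P₀.2) = P₀.2 := by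
      rw [← Paper.realize_eqForm]
      refine (hiff0 _).mpr ?_
      rw [Paper.realize_eqForm, htapp_t, htapp_s]
    refine ⟨⟨P₀.1, Paper.tapp t P₀.2⟩,
      Paper.mem_Kclass_aux P₀ hP₀K t s (Paper.tapp t P₀.2) rfl hsts, Fin.elim0, ?_⟩
    erw [FirstOrder.Language.Formula.realize_relabel, Sum.elim_comp_inl,
      FirstOrder.Language.Formula.realize_inf]
    constructor
    · rw [Paper.realize_subst_tapp, hsts, hφ₁ _ _ P₀.2 v₀]
      exact hφ₀
    · rw [Paper.realize_eqForm, hsts]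
  · -- forcing
    rintro P hPK v hΦ ψ ⟨χ, hχb, rfl⟩
    erw [FirstOrder.Language.Formula.realize_relabel, Sum.elim_comp_inl,
      FirstOrder.Language.Formula.realize_inf] at hΦ
    obtain ⟨hΦ1, hΦ2⟩ := hΦ
    rw [Paper.realize_subst_tapp] at hΦ1
    rw [Paper.realize_eqForm] at hΦ2
    have hP'K := Paper.mem_Kclass_aux P hPK s t (Paper.tapp s P.2) rfl hΦ2
    have h1 : Paper.RealizesNType (Paper.tapp s P.2) (Paper.ctype (L := L) a) :=
      ⟨Fin.elim0, hforce ⟨P.1, Paper.tapp s P.2⟩ hP'K Fin.elim0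
        ((hφ₁ _ _ (Paper.tapp s P.2) Fin.elim0).mp hΦ1)⟩
    have hiff1 := Paper.realizes_ctype_iff' h1
    erw [FirstOrder.Language.Formula.realize_relabel, Sum.elim_comp_inl, ← hΦ2,
      ← Paper.realize_subst_tapp]
    refine (hiff1 _).mpr ?_
    rw [Paper.realize_subst_tapp, htapp_t]
    exact hχb
end
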